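/- Let d ∈ F[x] be a nonconstant polynomial and let {ω_i}_{i=1}^r and {η_i}_{i=1}^r (r ≥ 1) be two bases of the isotropy group G_d, with ω_i(d) = ε_i·d, η_i(d) = e_i·d for nonzero ε_i, e_i ∈ F, and ω_i = θ_x^{α_i}, η_i = θ_x^{β_i} with α_i, β_i ∈ ℤⁿ. Then for every f ∈ F(x), every c = (c₁,…,cₙ) with all c_i ∈ F nonzero, and every s ∈ ℤ: f is (ε₁^s c^{α₁}ω₁,…,ε_r^s c^{α_r}ω_r)-summable in F(x) if and only if f is (e₁^s c^{β₁}η₁,…,e_r^s c^{β_r}η_r)-summable in F(x). -/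

import Mathlib

noncomputable section

/-- The field of rational functions `F(x₁,…,xₙ)`, modeled as the fraction field of the
multivariate polynomial ring. -/
abbrev MvRat (F : Type*) [Field F] (n : ℕ) := FractionRing (MvPolynomial (Fin n) F)

/-- The image of the variable `xᵢ` in `F(x₁,…,xₙ)`. -/
def xv {F : Type*} [Field F] {n : ℕ} (i : Fin n) : MvRat F n :=
  algebraMap (MvPolynomial (Fin n) F) (MvRat F n) (MvPolynomial.X i)

/-- The subfield `F(x₂,…,xₙ)` of `F(x₁,…,xₙ)` (the variable `x₁` has index `0`). -/
def hatField (F : Type*) [Field F] (n : ℕ) [NeZero n] : Subfield (MvRat F n) :=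
  Subfield.closure (Set.range (algebraMap F (MvRat F n)) ∪ (xv '' {i : Fin n | i ≠ 0}))

/-- `a` is a polynomial in `x1` over the subfield `E` of degree `< D`. -/
def IsPolyDeg {L : Type*} [Field L] (E : Subfield L) (x1 : L) (D : ℕ) (a : L) : Prop :=
  ∃ cf : Fin D → E, a = ∑ k : Fin D, (cf k : L) * x1 ^ (k : ℕ)

/-- `a` is a polynomial in `x1` over the subfield `E`, i.e. `a ∈ E[x1]`. -/
def IsPolyE {L : Type*} [Field L] (E : Subfield L) (x1 a : L) : Prop :=
  ∃ D : ℕ, IsPolyDeg E x1 D a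

/-- `a` is a Laurent polynomial in `x1` over the subfield `E`, i.e. `a ∈ E[x1, x1⁻¹]`. -/
def IsLaurent {L : Type*} [Field L] (E : Subfield L) (x1 a : L) : Prop :=
  ∃ (s : Finset ℤ) (cf : ℤ → L), (∀ k ∈ s, cf k ∈ E) ∧ a = ∑ k ∈ s, cf k * x1 ^ k

/-- For a family `θ` of `F`-automorphisms and an exponent vector `α`,
the product `∏ i, θᵢ^(αᵢ)` (the element `θ_x^α` of the group generated by the `θᵢ`). -/
def thetaPowS {F L : Type*} [CommSemiring F] [Semiring L] [Algebra F L] {ι : Type*} [Fintype ι]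
    (θ : ι → (L ≃ₐ[F] L)) (α : ι → ℤ) : L ≃ₐ[F] L :=
  (Finset.univ.toList.map fun i => θ i ^ α i).prod

/-- Membership in the space `V_{[d]_G,j}`: `f` is a finite sum of fractions `a_g / g(d)^j`
with `g` in the group `G` and `a_g ∈ E[x₁]` of degree `< D` (`= deg_{x₁} d`). -/
def MemV {F L : Type*} [Field F] [Field L] [Algebra F L] (G : Set (L ≃ₐ[F] L))
    (E : Subfield L) (x1 : L) (dd : L) (D j : ℕ) (f : L) : Prop :=
  ∃ s : Finset (L ≃ₐ[F] L), ↑s ⊆ G ∧ ∃ a : (L ≃ₐ[F] L) → L,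
    (∀ g ∈ s, IsPolyDeg E x1 D (a g)) ∧ f = ∑ g ∈ s, a g / (g dd) ^ j

/-- `p` and `p'` are `G`-equivalent: `p = c · g(p')` for some nonzero `c ∈ F` and `g ∈ G`. -/
def GEquivSet {F L : Type*} [Field F] [Field L] [Algebra F L] (G : Set (L ≃ₐ[F] L))
    (p p' : L) : Prop :=
  ∃ c : F, c ≠ 0 ∧ ∃ g ∈ G, p = algebraMap F L c * g p'

/-- `w` divides `p` inside the ring `E[x1]`. -/
def DvdE {L : Type*} [Field L] (E : Subfield L) (x1 w p : L) : Prop :=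
  ∃ u : L, IsPolyE E x1 u ∧ p = w * u

/-- `p ∈ E[x₁]` is normal w.r.t. `θ1`: `gcd(p, θ1^ℓ(p)) = 1` for all nonzero `ℓ ∈ ℤ`,
i.e. every common divisor (in `E[x₁]`) of `p` and `θ1^ℓ(p)` is a unit (lies in `E`). -/
def NormalWrt {F L : Type*} [Field F] [Field L] [Algebra F L] (E : Subfield L) (x1 : L)
    (θ1 : L ≃ₐ[F] L) (p : L) : Prop :=
  ∀ ℓ : ℤ, ℓ ≠ 0 → ∀ w : L, IsPolyE E x1 w →
    DvdE E x1 w p → DvdE E x1 w ((θ1 ^ ℓ) p) → w ∈ E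

/-- The isotropy group of `p` (in exponent-vector coordinates): the subgroup of `ℤ^ι`
of all `α` with `Θ(α)(p) = c·p` for some nonzero `c ∈ F`. -/
def isotropyZ {F L : Type*} [Field F] [Field L] [Algebra F L] {ι : Type*}
    (Θ : (ι → ℤ) → (L ≃ₐ[F] L))
    (hadd : ∀ α β, Θ (α + β) = Θ α * Θ β) (h0 : Θ 0 = 1) (p : L) :
    AddSubgroup (ι → ℤ) where
  carrier := {α | ∃ c : F, c ≠ 0 ∧ Θ α p = algebraMap F L c * p}
  zero_mem' := ⟨1, one_ne_zero, by simp [h0]⟩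
  add_mem' := by
    rintro α β ⟨c, hc, hcp⟩ ⟨e, he, hep⟩
    refine ⟨e * c, mul_ne_zero he hc, ?_⟩
    rw [hadd, AlgEquiv.mul_apply, hep, map_mul, AlgEquiv.commutes, hcp, map_mul]
    ring
  neg_mem' := by
    rintro α ⟨c, hc, hcp⟩
    refine ⟨c⁻¹, inv_ne_zero hc, ?_⟩
    have h1 : Θ (-α) (Θ α p) = p := by
      rw [← AlgEquiv.mul_apply, ← hadd, neg_add_cancel, h0, AlgEquiv.one_apply]
    rw [hcp, map_mul, AlgEquiv.commutes] at h1
    have hc0 : (algebraMap F L) c ≠ 0 :=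
      (map_ne_zero_iff _ (algebraMap F L).injective).mpr hc
    rw [map_inv₀, eq_inv_mul_iff_mul_eq₀ hc0]
    exact h1

end


set_option synthInstance.maxHeartbeats 1000000
set_option maxHeartbeats 1000000

section Aux

private lemma list_prod_zpow_add {G : Type*} [Group G] {ι : Type*} (θ : ι → G)
    (hcomm : ∀ i j, Commute (θ i) (θ j)) (a b : ι → ℤ) (l : List ι) :
    (l.map fun i => θ i ^ (a i + b i)).prod
      = (l.map fun i => θ i ^ a i).prod * (l.map fun i => θ i ^ b i).prod := by
  induction l with
  | nil => simp
  | cons i l ih =>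
    have h1 : Commute (θ i ^ b i) ((l.map fun j => θ j ^ a j).prod) := by
      apply Commute.list_prod_right
      intro y hy
      obtain ⟨j, _, rfl⟩ := List.mem_map.mp hy
      exact (hcomm i j).zpow_zpow _ _
    simp only [List.map_cons, List.prod_cons]
    rw [ih, zpow_add]
    calc θ i ^ a i * θ i ^ b i * ((l.map fun j => θ j ^ a j).prod * (l.map fun j => θ j ^ b j).prod)
        = θ i ^ a i * ((θ i ^ b i * (l.map fun j => θ j ^ a j).prod) * (l.map fun j => θ j ^ b j).prod) := by
          simp only [mul_assoc]
      _ = θ i ^ a i * (((l.map fun j => θ j ^ a j).prod * θ i ^ b i) * (l.map fun j => θ j ^ b j).prod) := by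
          rw [h1.eq]
      _ = θ i ^ a i * (l.map fun j => θ j ^ a j).prod * (θ i ^ b i * (l.map fun j => θ j ^ b j).prod) := by
          simp only [mul_assoc]

private lemma thetaPowS_add {F L : Type*} [CommSemiring F] [Semiring L] [Algebra F L]
    {ι : Type*} [Fintype ι] (θ : ι → (L ≃ₐ[F] L))
    (hcomm : ∀ i j, Commute (θ i) (θ j)) (a b : ι → ℤ) :
    thetaPowS θ (a + b) = thetaPowS θ a * thetaPowS θ b := by
  unfold thetaPowS
  exact list_prod_zpow_add θ hcomm a b _

private lemma thetaPowS_zero {F L : Type*} [CommSemiring F] [Semiring L] [Algebra F L]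
    {ι : Type*} [Fintype ι] (θ : ι → (L ≃ₐ[F] L)) :
    thetaPowS θ (0 : ι → ℤ) = 1 := by
  unfold thetaPowS
  refine List.prod_eq_one ?_
  intro x hx
  obtain ⟨i, _, rfl⟩ := List.mem_map.mp hx
  simp

private lemma addsubgroup_pi_mem {r : ℕ} (H : AddSubgroup (Fin r → ℤ))
    (h : ∀ j, Pi.single j (1:ℤ) ∈ H) (t : Fin r → ℤ) : t ∈ H := by
  have ht : t = ∑ j : Fin r, t j • Pi.single j (1:ℤ) := by
    funext l
    simp [Finset.sum_apply, Pi.single_apply]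
  rw [ht]
  exact AddSubgroup.sum_mem _ fun j _ => AddSubgroup.zsmul_mem _ (h j) _

private lemma zpow_sum₀ {F : Type*} [Field F] {x : F} (hx : x ≠ 0) {ι : Type*}
    (S : Finset ι) (f : ι → ℤ) : x ^ (∑ i ∈ S, f i) = ∏ i ∈ S, x ^ f i := by
  classical
  induction S using Finset.cons_induction with
  | empty => simp
  | cons i S hi ih => rw [Finset.sum_cons, Finset.prod_cons, zpow_add₀ hx, ih]

private lemma algEquiv_ext_xv {F : Type*} [Field F] {n : ℕ}
    {φ ψ : MvRat F n ≃ₐ[F] MvRat F n} (h : ∀ l, φ (xv l) = ψ (xv l)) : φ = ψ := by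
  have key : (φ.toAlgHom.toRingHom) = (ψ.toAlgHom.toRingHom) := by
    apply IsLocalization.ringHom_ext (nonZeroDivisors (MvPolynomial (Fin n) F))
    apply MvPolynomial.ringHom_ext
    · intro a
      have ha : algebraMap (MvPolynomial (Fin n) F) (MvRat F n) (MvPolynomial.C a)
          = algebraMap F (MvRat F n) a := by
        rw [← MvPolynomial.algebraMap_eq, ← IsScalarTower.algebraMap_apply]
      simp only [RingHom.comp_apply, ha]
      simp [AlgEquiv.commutes]
    · intro i
      simpa [xv] using h i
  exact AlgEquiv.ext fun x => RingHom.congr_fun key x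

private lemma theta_commute {F : Type*} [Field F] {n : ℕ}
    (q : F) (θ : Fin n → (MvRat F n ≃ₐ[F] MvRat F n))
    (hθfix : ∀ i l : Fin n, i ≠ l → θ i (xv l) = xv l)
    (hθ : ∀ i : Fin n,
      θ i (xv i) = xv i + 1 ∨ θ i (xv i) = algebraMap F (MvRat F n) q * xv i)
    (i j : Fin n) : Commute (θ i) (θ j) := by
  rcases eq_or_ne i j with rfl | hij
  · exact Commute.refl _
  · show θ i * θ j = θ j * θ i
    apply algEquiv_ext_xv
    intro l
    rw [AlgEquiv.mul_apply, AlgEquiv.mul_apply]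
    rcases eq_or_ne l i with rfl | hli
    · rw [hθfix j l (Ne.symm hij)]
      rcases hθ l with hh | hh
      · rw [hh, map_add (θ j), map_one (θ j), hθfix j l (Ne.symm hij)]
      · rw [hh, map_mul (θ j), AlgEquiv.commutes, hθfix j l (Ne.symm hij)]
    · rcases eq_or_ne l j with rfl | hlj
      · rw [hθfix i l hij]
        rcases hθ l with hh | hh
        · rw [hh, map_add (θ i), map_one (θ i), hθfix i l hij]
        · rw [hh, map_mul (θ i), AlgEquiv.commutes, hθfix i l hij]
      · rw [hθfix j l (Ne.symm hlj), hθfix i l (Ne.symm hli), hθfix j l (Ne.symm hlj)]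

end Aux

private lemma pi_int_induction {r : ℕ} (P : (Fin r → ℤ) → Prop) (h0 : P 0)
    (hadd : ∀ t t', P t → P t' → P (t + t')) (hneg : ∀ t, P t → P (-t))
    (hsingle : ∀ j, P (Pi.single j 1)) : ∀ t, P t := by
  intro t
  let H : AddSubgroup (Fin r → ℤ) :=
  { carrier := setOf P
    zero_mem' := h0
    add_mem' := fun ha hb => hadd _ _ ha hb
    neg_mem' := fun ha => hneg _ ha }
  exact addsubgroup_pi_mem H hsingle t

private def sumSubgroup {F : Type*} [Field F] {n r : ℕ}
    (θ : Fin n → (MvRat F n ≃ₐ[F] MvRat F n)) (α : Fin r → (Fin n → ℤ)) (κ : Fin r → F) :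
    AddSubgroup (MvRat F n) where
  carrier := {h : MvRat F n | ∃ g : Fin r → MvRat F n,
      h = ∑ i : Fin r, (algebraMap F (MvRat F n) (κ i) * thetaPowS θ (α i) (g i) - g i)}
  zero_mem' := ⟨0, by simp⟩
  add_mem' := by
    rintro x y ⟨u, rfl⟩ ⟨v, rfl⟩
    refine ⟨u + v, ?_⟩
    rw [← Finset.sum_add_distrib]
    refine Finset.sum_congr rfl fun i _ => ?_
    rw [Pi.add_apply, map_add (thetaPowS θ (α i))]
    ring
  neg_mem' := by
    rintro x ⟨u, rfl⟩
    refine ⟨-u, ?_⟩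
    rw [← Finset.sum_neg_distrib]
    refine Finset.sum_congr rfl fun i _ => ?_
    rw [Pi.neg_apply, map_neg (thetaPowS θ (α i))]
    ring

private lemma mem_sumSubgroup {F : Type*} [Field F] {n r : ℕ}
    (θ : Fin n → (MvRat F n ≃ₐ[F] MvRat F n)) (α : Fin r → (Fin n → ℤ)) (κ : Fin r → F)
    (z : MvRat F n) : z ∈ sumSubgroup θ α κ ↔ ∃ g : Fin r → MvRat F n,
      z = ∑ i : Fin r, (algebraMap F (MvRat F n) (κ i) * thetaPowS θ (α i) (g i) - g i) :=
  Iff.rfl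

private lemma summable_transfer {F : Type*} [Field F] {n r : ℕ}
    (θ : Fin n → (MvRat F n ≃ₐ[F] MvRat F n))
    (hcomm : ∀ i j, Commute (θ i) (θ j))
    (dd : MvRat F n) (hdd : dd ≠ 0)
    (α β : Fin r → (Fin n → ℤ)) (ε e : Fin r → F)
    (hε : ∀ i, ε i ≠ 0)
    (hω : ∀ i, thetaPowS θ (α i) dd = algebraMap F (MvRat F n) (ε i) * dd)
    (hη : ∀ i, thetaPowS θ (β i) dd = algebraMap F (MvRat F n) (e i) * dd)
    (hspan : ∀ i : Fin r, ∃ t : Fin r → ℤ, β i = ∑ j : Fin r, t j • α j)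
    (c : Fin n → F) (hc : ∀ l, c l ≠ 0) (s : ℤ) (f : MvRat F n)
    (hf : ∃ g : Fin r → MvRat F n,
        f = ∑ i : Fin r,
          (algebraMap F (MvRat F n) (e i ^ s * ∏ l : Fin n, c l ^ (β i l)) *
              thetaPowS θ (β i) (g i) - g i)) :
    ∃ g : Fin r → MvRat F n,
        f = ∑ i : Fin r,
          (algebraMap F (MvRat F n) (ε i ^ s * ∏ l : Fin n, c l ^ (α i l)) *
              thetaPowS θ (α i) (g i) - g i) := by
  classical
  obtain ⟨g, hfg⟩ := hf
  have haMinj : Function.Injective (algebraMap F (MvRat F n)) :=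
    RingHom.injective (algebraMap F (MvRat F n))
  have hκ0 : ∀ j, (ε j ^ s * ∏ l : Fin n, c l ^ (α j l)) ≠ 0 := fun j =>
    mul_ne_zero (zpow_ne_zero _ (hε j))
      (Finset.prod_ne_zero_iff.mpr fun l _ => zpow_ne_zero _ (hc l))
  have Θadd : ∀ a b : Fin n → ℤ, thetaPowS θ (a + b) = thetaPowS θ a * thetaPowS θ b :=
    thetaPowS_add θ hcomm
  have Θzero : thetaPowS θ (0 : Fin n → ℤ) = 1 := thetaPowS_zero θ
  set aM := algebraMap F (MvRat F n) with haM
  set κ : Fin r → F := fun j => ε j ^ s * ∏ l : Fin n, c l ^ (α j l) with hκdef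
  set Γ : (Fin r → ℤ) → (Fin n → ℤ) := fun t => ∑ j : Fin r, t j • α j with hΓdef
  have hΓadd : ∀ t t', Γ (t + t') = Γ t + Γ t' := by
    intro t t'
    simp only [hΓdef, Pi.add_apply, add_smul, Finset.sum_add_distrib]
  have hΓzero : Γ 0 = 0 := by
    simp only [hΓdef, Pi.zero_apply, zero_smul, Finset.sum_const_zero]
  have hΓsingle : ∀ j, Γ (Pi.single j 1) = α j := by
    intro j
    simp only [hΓdef]
    rw [Finset.sum_eq_single j]
    · simp
    · intro b _ hb
      simp [Pi.single_apply, hb]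
    · exact fun h => absurd (Finset.mem_univ j) h
  set χ : (Fin r → ℤ) → F := fun t => ∏ j : Fin r, κ j ^ t j with hχdef
  have hχadd : ∀ t t', χ (t + t') = χ t * χ t' := by
    intro t t'
    simp only [hχdef]
    rw [← Finset.prod_mul_distrib]
    exact Finset.prod_congr rfl fun j _ => by rw [Pi.add_apply, zpow_add₀ (hκ0 j)]
  have hχzero : χ 0 = 1 := by
    simp only [hχdef, Pi.zero_apply, zpow_zero, Finset.prod_const_one]
  have hχsingle : ∀ j, χ (Pi.single j 1) = κ j := by
    intro j
    simp only [hχdef]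
    rw [Finset.prod_eq_single j]
    · simp
    · intro b _ hb
      simp [Pi.single_apply, hb]
    · exact fun h => absurd (Finset.mem_univ j) h
  have key_d : ∀ t : Fin r → ℤ, thetaPowS θ (Γ t) dd = aM (∏ j : Fin r, ε j ^ t j) * dd := by
    refine pi_int_induction _ ?_ ?_ ?_ ?_
    · rw [hΓzero, Θzero]
      simp
    · intro t t' ht ht'
      have hprod : (∏ j : Fin r, ε j ^ (t + t') j)
          = (∏ j : Fin r, ε j ^ t' j) * ∏ j : Fin r, ε j ^ t j := by
        rw [← Finset.prod_mul_distrib]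
        refine Finset.prod_congr rfl fun j _ => ?_
        rw [Pi.add_apply, zpow_add₀ (hε j)]
        ring
      rw [hΓadd, Θadd, AlgEquiv.mul_apply, ht', map_mul (thetaPowS θ (Γ t)),
        AlgEquiv.commutes, ht, hprod, map_mul]
      ring
    · intro t ht
      have hu : (∏ j : Fin r, ε j ^ t j) ≠ 0 :=
        Finset.prod_ne_zero_iff.mpr fun j _ => zpow_ne_zero _ (hε j)
      have h1 : thetaPowS θ (Γ (-t)) (thetaPowS θ (Γ t) dd) = dd := by
        rw [← AlgEquiv.mul_apply, ← Θadd, ← hΓadd, neg_add_cancel, hΓzero, Θzero]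
        rfl
      rw [ht, map_mul (thetaPowS θ (Γ (-t))), AlgEquiv.commutes] at h1
      have h2 : (∏ j : Fin r, ε j ^ (-t) j) = (∏ j : Fin r, ε j ^ t j)⁻¹ := by
        rw [← Finset.prod_inv_distrib]
        exact Finset.prod_congr rfl fun j _ => by rw [Pi.neg_apply, zpow_neg]
      have hM0 : aM (∏ j : Fin r, ε j ^ t j) ≠ 0 := fun hz => hu (haMinj (by simp [hz]))
      rw [h2, map_inv₀, eq_inv_mul_iff_mul_eq₀ hM0]
      exact h1
    · intro j
      have hps : (∏ j' : Fin r, ε j' ^ ((Pi.single j 1 : Fin r → ℤ)) j') = ε j := by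
        rw [Finset.prod_eq_single j]
        · simp
        · intro b _ hb
          simp [Pi.single_apply, hb]
        · exact fun h => absurd (Finset.mem_univ j) h
      rw [hΓsingle, hps]
      exact hω j
  have key_main : ∀ t : Fin r → ℤ, ∀ x : MvRat F n,
      aM (χ t) * thetaPowS θ (Γ t) x - x ∈ sumSubgroup θ α κ := by
    refine pi_int_induction
      (fun t => ∀ x : MvRat F n, aM (χ t) * thetaPowS θ (Γ t) x - x ∈ sumSubgroup θ α κ)
      ?_ ?_ ?_ ?_
    · intro x
      have h0 : aM (χ 0) * thetaPowS θ (Γ 0) x - x = 0 := by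
        rw [hχzero, hΓzero, Θzero, map_one, one_mul]
        simp
      rw [h0]
      exact (sumSubgroup θ α κ).zero_mem
    · intro t t' ht ht' x
      have hel : aM (χ (t + t')) * thetaPowS θ (Γ (t + t')) x - x
          = (aM (χ t) * thetaPowS θ (Γ t) (aM (χ t') * thetaPowS θ (Γ t') x)
              - (aM (χ t') * thetaPowS θ (Γ t') x))
            + (aM (χ t') * thetaPowS θ (Γ t') x - x) := by
        rw [hχadd, hΓadd, Θadd, AlgEquiv.mul_apply,
          map_mul (thetaPowS θ (Γ t)), AlgEquiv.commutes, map_mul aM]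
        ring
      rw [hel]
      exact (sumSubgroup θ α κ).add_mem (ht _) (ht' x)
    · intro t ht x
      have h1 := ht (aM (χ (-t)) * thetaPowS θ (Γ (-t)) x)
      have hcinv : χ t * χ (-t) = 1 := by
        rw [← hχadd, add_neg_cancel, hχzero]
      have h2 : aM (χ t) * thetaPowS θ (Γ t)
          (aM (χ (-t)) * thetaPowS θ (Γ (-t)) x) = x := by
        rw [map_mul (thetaPowS θ (Γ t)), AlgEquiv.commutes, ← AlgEquiv.mul_apply,
          ← Θadd, ← hΓadd, add_neg_cancel, hΓzero, Θzero, ← mul_assoc, ← map_mul,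
          hcinv, map_one, one_mul]
        rfl
      rw [h2] at h1
      have h3 := (sumSubgroup θ α κ).neg_mem h1
      rw [neg_sub] at h3
      exact h3
    · intro j x
      rw [hχsingle, hΓsingle]
      refine (mem_sumSubgroup θ α κ _).mpr ⟨fun i => if i = j then x else 0, ?_⟩
      rw [Finset.sum_eq_single j]
      · simp
        exact Or.inl rfl
      · intro b _ hb
        simp [hb]
      · exact fun h => absurd (Finset.mem_univ j) h
  have hfin : f ∈ sumSubgroup θ α κ := by
    rw [hfg]
    refine AddSubgroup.sum_mem _ ?_
    intro i _
    obtain ⟨t, hti⟩ := hspan i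
    have hβΓ : β i = Γ t := hti
    have hei : e i = ∏ j : Fin r, ε j ^ t j := by
      have h1 := hη i
      rw [hβΓ, key_d t] at h1
      exact (haMinj (mul_right_cancel₀ hdd h1)).symm
    have hβl : ∀ l, β i l = ∑ j : Fin r, t j * α j l := by
      intro l
      rw [hti]
      simp [Finset.sum_apply]
    have hconst : e i ^ s * ∏ l : Fin n, c l ^ (β i l) = χ t := by
      rw [hei]
      simp only [hχdef, hκdef]
      have hA : (∏ j : Fin r, ε j ^ t j) ^ s = ∏ j : Fin r, (ε j ^ s) ^ t j := by
        rw [← Finset.prod_zpow]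
        refine Finset.prod_congr rfl fun j _ => ?_
        rw [← zpow_mul, mul_comm, zpow_mul]
      have hB : (∏ l : Fin n, c l ^ (β i l))
          = ∏ j : Fin r, (∏ l : Fin n, c l ^ (α j l)) ^ t j := by
        have hcl : ∀ l, c l ^ (β i l) = ∏ j : Fin r, (c l ^ (α j l)) ^ t j := by
          intro l
          rw [hβl l, zpow_sum₀ (hc l)]
          exact Finset.prod_congr rfl fun j _ => by rw [← zpow_mul, mul_comm, zpow_mul]
        calc (∏ l : Fin n, c l ^ (β i l))
            = ∏ l : Fin n, ∏ j : Fin r, (c l ^ (α j l)) ^ t j :=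
              Finset.prod_congr rfl fun l _ => hcl l
          _ = ∏ j : Fin r, ∏ l : Fin n, (c l ^ (α j l)) ^ t j := Finset.prod_comm
          _ = ∏ j : Fin r, (∏ l : Fin n, c l ^ (α j l)) ^ t j :=
              Finset.prod_congr rfl fun j _ => Finset.prod_zpow _ _ _
      rw [hA, hB, ← Finset.prod_mul_distrib]
      exact Finset.prod_congr rfl fun j _ => by rw [mul_zpow]
    rw [hconst, hβΓ]
    exact key_main t (g i)
  obtain ⟨u, hu⟩ := (mem_sumSubgroup θ α κ f).mp hfin
  refine ⟨u, ?_⟩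
  rw [hu]


set_option maxHeartbeats 1000000 in
/-- **Lemma: basis exchange.** Let `d ∈ F[x]` be nonconstant and let
`{ωᵢ}ᵢ`, `{ηᵢ}ᵢ` (`r ≥ 1`) be two bases of the isotropy group `G_d`, with `ωᵢ(d) = εᵢ·d`,
`ηᵢ(d) = eᵢ·d`, `ωᵢ = θ_x^{αᵢ}`, `ηᵢ = θ_x^{βᵢ}`. Then for every `f ∈ F(x)`, every tuple
of nonzero constants `c` and every `s ∈ ℤ`: `f` is
`(ε₁^s c^{α₁}ω₁,…,ε_r^s c^{α_r}ω_r)`-summable iff `f` is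
`(e₁^s c^{β₁}η₁,…,e_r^s c^{β_r}η_r)`-summable in `F(x)`. -/
theorem stmt_11 {F : Type*} [Field F] [CharZero F] {n : ℕ} [NeZero n]
    (q : F) (hq0 : q ≠ 0) (hq : ∀ l : ℤ, l ≠ 0 → q ^ l ≠ 1)
    (θ : Fin n → (MvRat F n ≃ₐ[F] MvRat F n))
    (hθfix : ∀ i l : Fin n, i ≠ l → θ i (xv l) = xv l)
    (hθ : ∀ i : Fin n,
      θ i (xv i) = xv i + 1 ∨ θ i (xv i) = algebraMap F (MvRat F n) q * xv i)
    (d : MvPolynomial (Fin n) F) (hd : 0 < d.totalDegree)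
    (r : ℕ) (hr : 1 ≤ r)
    (α β : Fin r → (Fin n → ℤ)) (ε e : Fin r → F)
    (hε : ∀ i, ε i ≠ 0) (he : ∀ i, e i ≠ 0)
    (hω : ∀ i : Fin r,
      thetaPowS θ (α i) (algebraMap (MvPolynomial (Fin n) F) (MvRat F n) d) =
        algebraMap F (MvRat F n) (ε i) * algebraMap (MvPolynomial (Fin n) F) (MvRat F n) d)
    (hη : ∀ i : Fin r,
      thetaPowS θ (β i) (algebraMap (MvPolynomial (Fin n) F) (MvRat F n) d) =
        algebraMap F (MvRat F n) (e i) * algebraMap (MvPolynomial (Fin n) F) (MvRat F n) d)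
    -- `{ωᵢ}` is a basis of `G_d`: independent and spanning
    (hωind : ∀ t : Fin r → ℤ, (∑ i : Fin r, t i • α i) = 0 → t = 0)
    (hωspan : ∀ γ : Fin n → ℤ,
      (∃ c0 : F, c0 ≠ 0 ∧
        thetaPowS θ γ (algebraMap (MvPolynomial (Fin n) F) (MvRat F n) d) =
          algebraMap F (MvRat F n) c0 *
            algebraMap (MvPolynomial (Fin n) F) (MvRat F n) d) →
      ∃ t : Fin r → ℤ, γ = ∑ i : Fin r, t i • α i)
    -- `{ηᵢ}` is a basis of `G_d`: independent and spanning
    (hηind : ∀ t : Fin r → ℤ, (∑ i : Fin r, t i • β i) = 0 → t = 0)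
    (hηspan : ∀ γ : Fin n → ℤ,
      (∃ c0 : F, c0 ≠ 0 ∧
        thetaPowS θ γ (algebraMap (MvPolynomial (Fin n) F) (MvRat F n) d) =
          algebraMap F (MvRat F n) c0 *
            algebraMap (MvPolynomial (Fin n) F) (MvRat F n) d) →
      ∃ t : Fin r → ℤ, γ = ∑ i : Fin r, t i • β i)
    (f : MvRat F n) (c : Fin n → F) (hc : ∀ i, c i ≠ 0) (s : ℤ) :
    (∃ g : Fin r → MvRat F n,
        f = ∑ i : Fin r,
          (algebraMap F (MvRat F n) (ε i ^ s * ∏ l : Fin n, c l ^ (α i l)) *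
              thetaPowS θ (α i) (g i) - g i)) ↔
    (∃ g : Fin r → MvRat F n,
        f = ∑ i : Fin r,
          (algebraMap F (MvRat F n) (e i ^ s * ∏ l : Fin n, c l ^ (β i l)) *
              thetaPowS θ (β i) (g i) - g i)) := by
  
  have hcomm : ∀ i j, Commute (θ i) (θ j) := theta_commute q θ hθfix hθ
  have hd0 : d ≠ 0 := by
    rintro rfl
    simp at hd
  have hdd : algebraMap (MvPolynomial (Fin n) F) (MvRat F n) d ≠ 0 := fun h =>
    hd0 ((IsFractionRing.to_map_eq_zero_iff).mp h)
  constructor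
  · intro hf
    exact summable_transfer θ hcomm _ hdd β α e ε he hη hω
      (fun i => hηspan (α i) ⟨ε i, hε i, hω i⟩) c hc s f hf
  · intro hf
    exact summable_transfer θ hcomm _ hdd α β ε e hε hω hη
      (fun i => hωspan (β i) ⟨e i, he i, hη i⟩) c hc s f hf
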